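/- Let q > 1 and 0 < c < 1. Then for every integer n ≥ 2 and every integer j with 1 ≤ j ≤ n-1, ((1-q^{-jc})(1-q^{-(n-j)c}))/((1-q^{-j})(1-q^{-(n-j)})) ≥ c(1-q^{-nc})/(1-q^{-n}). -/
import Mathlib

open Real

lemma sinh_aux (c : ℝ) (hc0 : 0 < c) (hc1 : c < 1) {s : ℝ} (hs : 0 ≤ s) :
    (1 + c) * Real.sinh ((1 - c) * s) ≤ (1 - c) * Real.sinh ((1 + c) * s) := by
  set g : ℝ → ℝ := fun x => (1 - c) * Real.sinh ((1 + c) * x) - (1 + c) * Real.sinh ((1 - c) * x)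
    with hg
  have hd : ∀ x : ℝ, HasDerivAt g
      ((1 - c) * (Real.cosh ((1 + c) * x) * (1 + c)) -
        (1 + c) * (Real.cosh ((1 - c) * x) * (1 - c))) x := by
    intro x
    have h1 : HasDerivAt (fun x : ℝ => (1 + c) * x) (1 + c) x := by
      simpa using (hasDerivAt_id x).const_mul (1 + c)
    have h2 : HasDerivAt (fun x : ℝ => (1 - c) * x) (1 - c) x := by
      simpa using (hasDerivAt_id x).const_mul (1 - c)
    exact (h1.sinh.const_mul (1 - c)).sub (h2.sinh.const_mul (1 + c))
  have hmono : MonotoneOn g (Set.Ici 0) := by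
    apply monotoneOn_of_deriv_nonneg (convex_Ici 0)
    · exact fun x _ => (hd x).continuousAt.continuousWithinAt
    · exact fun x _ => (hd x).differentiableAt.differentiableWithinAt
    · intro x hx
      rw [interior_Ici] at hx
      rw [(hd x).deriv]
      have hxpos : (0:ℝ) < x := hx
      have hcc : Real.cosh ((1 - c) * x) ≤ Real.cosh ((1 + c) * x) := by
        rw [Real.cosh_le_cosh]
        rw [abs_of_nonneg (by nlinarith), abs_of_nonneg (by nlinarith)]
        nlinarith
      nlinarith [mul_nonneg (mul_nonneg (by linarith : (0:ℝ) ≤ 1 - c)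
        (by linarith : (0:ℝ) ≤ 1 + c)) (sub_nonneg.2 hcc)]
  have h0 : g 0 = 0 := by simp [hg]
  have := hmono (Set.mem_Ici.2 le_rfl) (Set.mem_Ici.2 hs) hs
  rw [h0] at this
  simp only [hg] at this
  linarith

lemma psi_nonneg (c : ℝ) (hc0 : 0 < c) (hc1 : c < 1) {u : ℝ} (hu0 : 0 < u) (hu1 : u < 1) :
    c * ((1 + u ^ c) * (1 - u)) ≤ (1 + u) * (1 - u ^ c) := by
  set s : ℝ := -(Real.log u) / 2 with hsdef
  have hL : Real.log u < 0 := Real.log_neg hu0 hu1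
  have hs : 0 ≤ s := by simp [hsdef]; linarith
  have H := sinh_aux c hc0 hc1 hs
  rw [Real.sinh_eq, Real.sinh_eq] at H
  set P : ℝ := Real.exp s with hPdef
  set Q : ℝ := Real.exp (c * s) with hQdef
  have hP : 0 < P := Real.exp_pos _
  have hQ : 0 < Q := Real.exp_pos _
  have e1 : Real.exp ((1 + c) * s) = P * Q := by
    rw [hPdef, hQdef, ← Real.exp_add]; ring_nf
  have e2 : Real.exp (-((1 + c) * s)) = (P * Q)⁻¹ := by rw [Real.exp_neg, e1]
  have e3 : Real.exp ((1 - c) * s) = P * Q⁻¹ := by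
    rw [hPdef, hQdef, ← Real.exp_neg, ← Real.exp_add]; ring_nf
  have e4 : Real.exp (-((1 - c) * s)) = P⁻¹ * Q := by
    rw [hPdef, hQdef, ← Real.exp_neg, ← Real.exp_add]; ring_nf
  rw [e1, e2, e3, e4] at H
  have hu : u = (P * P)⁻¹ := by
    rw [← Real.exp_log hu0, show Real.log u = -(s + s) by rw [hsdef]; ring,
      Real.exp_neg, Real.exp_add]
  have huc : u ^ c = (Q * Q)⁻¹ := by
    rw [Real.rpow_def_of_pos hu0, show Real.log u * c = -(c * s + c * s) by rw [hsdef]; ring,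
      Real.exp_neg, Real.exp_add]
  rw [huc, hu]
  have key : (1 + (P * P)⁻¹) * (1 - (Q * Q)⁻¹) - c * ((1 + (Q * Q)⁻¹) * (1 - (P * P)⁻¹)) =
      2 * ((1 - c) * ((P * Q - (P * Q)⁻¹) / 2) - (1 + c) * ((P * Q⁻¹ - P⁻¹ * Q) / 2)) / (P * Q) := by
    field_simp
    ring
  have h2 : 0 ≤ (1 - c) * ((P * Q - (P * Q)⁻¹) / 2) - (1 + c) * ((P * Q⁻¹ - P⁻¹ * Q) / 2) := by
    linarith
  have h3 : 0 ≤ 2 * ((1 - c) * ((P * Q - (P * Q)⁻¹) / 2) - (1 + c) * ((P * Q⁻¹ - P⁻¹ * Q) / 2)) / (P * Q) :=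
    div_nonneg (by linarith) (by positivity)
  linarith [key ▸ h3]

set_option maxHeartbeats 1000000 in
/-- Inequality (2.3): for `q > 1`, `0 < c < 1`, `n ≥ 2` and `1 ≤ j ≤ n - 1`,
`((1-q^{-jc})(1-q^{-(n-j)c}))/((1-q^{-j})(1-q^{-(n-j)})) ≥ c(1-q^{-nc})/(1-q^{-n})`. -/
theorem q_ratio_ineq_c_lt_one (q c : ℝ) (hq : 1 < q) (hc0 : 0 < c) (hc1 : c < 1)
    (n j : ℕ) (hn : 2 ≤ n) (hj1 : 1 ≤ j) (hj2 : j ≤ n - 1) :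
    c * (1 - q ^ (-((n : ℝ) * c))) / (1 - q ^ (-(n : ℝ))) ≤
      (1 - q ^ (-((j : ℝ) * c))) * (1 - q ^ (-(((n : ℝ) - (j : ℝ)) * c))) /
        ((1 - q ^ (-(j : ℝ))) * (1 - q ^ (-((n : ℝ) - (j : ℝ))))) := by
  have hq0 : (0:ℝ) < q := lt_trans one_pos hq
  have hj : (1:ℝ) ≤ (j:ℝ) := by exact_mod_cast hj1
  have hjn : j + 1 ≤ n := by omega
  have hjn' : (j:ℝ) + 1 ≤ (n:ℝ) := by exact_mod_cast hjn
  set k : ℝ := (n:ℝ) - (j:ℝ) with hk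
  have hk1 : (1:ℝ) ≤ k := by rw [hk]; linarith
  set X : ℝ := q ^ (-(j:ℝ)) with hX
  set Y : ℝ := q ^ (-k) with hY
  set P : ℝ := q ^ (-((j:ℝ) * c)) with hP
  set Q : ℝ := q ^ (-(k * c)) with hQ
  have hX0 : 0 < X := Real.rpow_pos_of_pos hq0 _
  have hY0 : 0 < Y := Real.rpow_pos_of_pos hq0 _
  have hP0 : 0 < P := Real.rpow_pos_of_pos hq0 _
  have hQ0 : 0 < Q := Real.rpow_pos_of_pos hq0 _
  have hX1 : X < 1 := Real.rpow_lt_one_of_one_lt_of_neg hq (by linarith)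
  have hY1 : Y < 1 := Real.rpow_lt_one_of_one_lt_of_neg hq (by linarith)
  have hXc : X ^ c = P := by
    rw [hX, hP, show -((j:ℝ) * c) = -(j:ℝ) * c by ring, Real.rpow_mul hq0.le]
  have hYc : Y ^ c = Q := by
    rw [hY, hQ, show -(k * c) = -k * c by ring, Real.rpow_mul hq0.le]
  have hXY : q ^ (-(n:ℝ)) = X * Y := by
    rw [hX, hY, ← Real.rpow_add hq0, show -(j:ℝ) + -k = -(n:ℝ) by rw [hk]; ring]
  have hPQ : q ^ (-((n:ℝ) * c)) = P * Q := by
    rw [hP, hQ, ← Real.rpow_add hq0,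
      show -((j:ℝ) * c) + -(k * c) = -((n:ℝ) * c) by rw [hk]; ring]
  have hP1 : P < 1 := Real.rpow_lt_one_of_one_lt_of_neg hq (by nlinarith)
  have hQ1 : Q < 1 := Real.rpow_lt_one_of_one_lt_of_neg hq (by nlinarith)
  have psiX := psi_nonneg c hc0 hc1 hX0 hX1
  have psiY := psi_nonneg c hc0 hc1 hY0 hY1
  rw [hXc] at psiX
  rw [hYc] at psiY
  rw [hXY, hPQ]
  have hd1 : 0 < 1 - X * Y := by nlinarith
  have hd2 : 0 < (1 - X) * (1 - Y) := mul_pos (by linarith) (by linarith)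
  rw [div_le_div_iff₀ hd1 hd2]
  have h1 : 0 ≤ (1 - P) * (1 - X) * ((1 + Y) * (1 - Q) - c * ((1 + Q) * (1 - Y))) :=
    mul_nonneg (mul_nonneg (by linarith) (by linarith)) (by linarith)
  have h2 : 0 ≤ (1 - Q) * (1 - Y) * ((1 + X) * (1 - P) - c * ((1 + P) * (1 - X))) :=
    mul_nonneg (mul_nonneg (by linarith) (by linarith)) (by linarith)
  nlinarith [h1, h2]
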